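/- Let R be a Noetherian integral domain graded by the nonnegative rational numbers, i.e., R = ⊕_{g ∈ ℚ_{≥0}} R_g with R_g R_h ⊆ R_{g+h}. Then R is a finitely generated algebra over R_0. -/

import Mathlib

/-- Let `R` be a Noetherian domain graded by the nonnegative rationals.  Then
`R` is a finitely generated algebra over its degree-zero subring `R₀`: there is
a finite set `s` of elements of `R` such that `R` is generated, as a ring, by
`R₀` together with `s`. -/
theorem nnrat_graded_noetherian_domain_finitely_generated
    (R : Type*) [CommRing R] [IsDomain R] [IsNoetherianRing R]
    (𝒜 : ℚ≥0 → AddSubgroup R) [GradedRing 𝒜] :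
    ∃ s : Finset R, Subring.closure ((𝒜 0 : Set R) ∪ s) = ⊤ := by
  classical
  set S : Set R := ⋃ (d : ℚ≥0) (_ : 0 < d), (𝒜 d : Set R) with hS
  have hfg : (Ideal.span S).FG := IsNoetherian.noetherian _
  obtain ⟨G, hG⟩ := hfg
  -- each generator lies in the span of a finite subset of S
  have hmem : ∀ g ∈ G, ∃ T : Finset R, ↑T ⊆ S ∧ g ∈ Submodule.span R (T : Set R) := by
    intro g hg
    have hgs : g ∈ Ideal.span S := by rw [← hG]; exact Ideal.subset_span hg
    exact Submodule.mem_span_finite_of_mem_span hgs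
  choose f hf1 hf2 using hmem
  set T : Finset R := G.attach.biUnion (fun g => f g g.2) with hT
  have hTS : (T : Set R) ⊆ S := by
    intro t ht
    simp only [hT, Finset.coe_biUnion, Set.mem_iUnion] at ht
    obtain ⟨g, hg, hgt⟩ := ht
    exact hf1 g g.2 hgt
  have hTspan : Ideal.span S = Ideal.span (T : Set R) := by
    apply le_antisymm
    · rw [← hG, Ideal.span_le]
      intro g hg
      refine Submodule.span_mono ?_ (hf2 g hg)
      intro x hx
      simp only [hT, Finset.coe_biUnion, Set.mem_iUnion]
      exact ⟨⟨g, hg⟩, Finset.mem_attach _ _, hx⟩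
    · exact Ideal.span_mono hTS
  -- choose a positive degree for each element of T
  have hdeg : ∀ t ∈ T, ∃ d : ℚ≥0, ∃ _ : 0 < d, t ∈ 𝒜 d := by
    intro t ht
    have := hTS ht
    simp only [hS, Set.mem_iUnion, SetLike.mem_coe] at this
    exact this
  choose deg hdegpos hdegmem using hdeg
  set D : Finset ℚ≥0 := insert 1 (T.attach.image fun t : {x // x ∈ T} => deg t.1 t.2) with hD
  have hDne : D.Nonempty := ⟨1, Finset.mem_insert_self _ _⟩
  set δ : ℚ≥0 := D.min' hDne with hδ
  have hδpos : 0 < δ := by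
    rw [hδ, Finset.lt_min'_iff]
    intro b hb
    rcases Finset.mem_insert.mp hb with h | h
    · simp [h]
    · obtain ⟨t, ht, rfl⟩ := Finset.mem_image.mp h
      exact hdegpos t t.2
  have hδle : ∀ t (ht : t ∈ T), δ ≤ deg t ht := by
    intro t ht
    exact Finset.min'_le D _ (Finset.mem_insert_of_mem
      (Finset.mem_image.mpr ⟨⟨t, ht⟩, Finset.mem_attach _ _, rfl⟩))
  refine ⟨T, ?_⟩
  set C : Subring R := Subring.closure ((𝒜 0 : Set R) ∪ T) with hC
  have hTC : ∀ t ∈ T, t ∈ C := fun t ht =>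
    Subring.subset_closure (Or.inr ht)
  have h0C : ∀ x ∈ 𝒜 0, x ∈ C := fun x hx =>
    Subring.subset_closure (Or.inl hx)
  -- main induction
  have key : ∀ n : ℕ, ∀ d : ℚ≥0, d ≤ n * δ → ∀ x ∈ 𝒜 d, x ∈ C := by
    intro n
    induction n with
    | zero =>
      intro d hd x hx
      have : d = 0 := le_antisymm (by simpa using hd) (zero_le)
      exact h0C x (this ▸ hx)
    | succ n ih =>
      intro d hd x hx
      rcases eq_or_ne d 0 with rfl | hd0
      · exact h0C x hx
      have hdpos : 0 < d := lt_of_le_of_ne (zero_le) (Ne.symm hd0)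
      have hxS : x ∈ Ideal.span S := Ideal.subset_span (by
        simp only [hS, Set.mem_iUnion, SetLike.mem_coe]
        exact ⟨d, hdpos, hx⟩)
      rw [hTspan] at hxS
      obtain ⟨c, hcsupp, hcsum⟩ := Submodule.mem_span_set.mp hxS
      have hxd : x = GradedRing.proj 𝒜 d x := by
        rw [GradedRing.proj_apply, DirectSum.decompose_of_mem_same 𝒜 hx]
      rw [hxd, ← hcsum, Finsupp.sum, map_sum]
      apply sum_mem
      intro t ht
      have htT : t ∈ T := hcsupp ht
      have htdeg : t ∈ 𝒜 (deg t htT) := hdegmem t htT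
      rw [GradedRing.proj_apply, smul_eq_mul]
      rcases le_or_gt (deg t htT) d with hle | hlt
      · rw [DirectSum.coe_decompose_mul_of_right_mem_of_le 𝒜 htdeg hle]
        refine mul_mem ?_ (hTC t htT)
        refine ih (d - deg t htT) ?_ _ (SetLike.coe_mem _)
        rw [tsub_le_iff_right]
        calc d ≤ (n + 1 : ℕ) * δ := hd
          _ = n * δ + δ := by push_cast; ring
          _ ≤ n * δ + deg t htT := by gcongr; exact hδle t htT
      · rw [DirectSum.coe_decompose_mul_of_right_mem_of_not_le 𝒜 htdeg (not_le.mpr hlt)]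
        exact zero_mem C
  have keyall : ∀ d : ℚ≥0, ∀ x ∈ 𝒜 d, x ∈ C := by
    intro d x hx
    obtain ⟨n, hn⟩ := exists_nat_ge (d / δ)
    refine key n d ?_ x hx
    rw [div_le_iff₀ hδpos] at hn
    exact hn
  rw [eq_top_iff]
  intro r _
  rw [← DirectSum.sum_support_decompose 𝒜 r]
  exact sum_mem fun i _ => keyall i _ (SetLike.coe_mem _)
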